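/- Let A be SPD, N a diagonal 0-1 projection matrix on ℝ^{n_f}, and suppose w* solves N A_ff N w* = −N A_fc e_ℓ with N w* = w*. Then w* minimizes both w ↦ ⟨A_ff w, w⟩ + 2⟨A_fc e_ℓ, w⟩ and w ↦ ⟨A_ff(w + A_ff⁻¹A_fc e_ℓ), w + A_ff⁻¹A_fc e_ℓ⟩ over {w : N w = w}; i.e., minimizing the energy of a column of P subject to a sparsity pattern is equivalent to minimizing the A_ff-norm distance of that column to the ideal-interpolation column subject to the same pattern. -/

import Mathlib

open Matrix

lemma aff_posdef_of_block (nf nc : ℕ)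
    (Aff : Matrix (Fin nf) (Fin nf) ℝ) (Afc : Matrix (Fin nf) (Fin nc) ℝ)
    (Acf : Matrix (Fin nc) (Fin nf) ℝ) (Acc : Matrix (Fin nc) (Fin nc) ℝ)
    (hA : (Matrix.fromBlocks Aff Afc Acf Acc).PosDef) : Aff.PosDef := by
  refine Matrix.PosDef.of_dotProduct_mulVec_pos ?_ ?_
  · have h := hA.isHermitian
    rw [Matrix.isHermitian_fromBlocks_iff] at h
    exact h.1
  · intro x hx
    have hx' : Sum.elim x (0 : Fin nc → ℝ) ≠ 0 := by
      intro h
      apply hx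
      funext i
      have := congrFun h (Sum.inl i)
      simpa using this
    have h := hA.dotProduct_mulVec_pos hx'
    rw [Matrix.fromBlocks_mulVec] at h
    simpa [sumElim_dotProduct_sumElim, Matrix.mulVec_zero] using h

/-- a solution of the patterned normal equation minimizes both the
column energy and the A_ff-distance to the ideal-interpolation column. -/
theorem normal_eq_sol_minimizes_both (nf nc : ℕ)
    (Aff : Matrix (Fin nf) (Fin nf) ℝ) (Afc : Matrix (Fin nf) (Fin nc) ℝ)
    (Acf : Matrix (Fin nc) (Fin nf) ℝ) (Acc : Matrix (Fin nc) (Fin nc) ℝ)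
    (hA : (Matrix.fromBlocks Aff Afc Acf Acc).PosDef)
    (d : Fin nf → ℝ) (hd : ∀ i, d i = 0 ∨ d i = 1)
    (N : Matrix (Fin nf) (Fin nf) ℝ) (hN : N = Matrix.diagonal d)
    (ℓ : Fin nc)
    (wstar : Fin nf → ℝ) (hfix : N.mulVec wstar = wstar)
    (hsol : N.mulVec (Aff.mulVec (N.mulVec wstar)) = -(N.mulVec (Afc.mulVec (Pi.single ℓ 1)))) :
    ∀ w : Fin nf → ℝ, N.mulVec w = w →
      (wstar ⬝ᵥ Aff.mulVec wstar + 2 * ((Afc.mulVec (Pi.single ℓ 1)) ⬝ᵥ wstar) ≤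
        w ⬝ᵥ Aff.mulVec w + 2 * ((Afc.mulVec (Pi.single ℓ 1)) ⬝ᵥ w)) ∧
      ((wstar + Aff⁻¹.mulVec (Afc.mulVec (Pi.single ℓ 1))) ⬝ᵥ
          Aff.mulVec (wstar + Aff⁻¹.mulVec (Afc.mulVec (Pi.single ℓ 1))) ≤
        (w + Aff⁻¹.mulVec (Afc.mulVec (Pi.single ℓ 1))) ⬝ᵥ
          Aff.mulVec (w + Aff⁻¹.mulVec (Afc.mulVec (Pi.single ℓ 1)))) := by
  set g := Afc.mulVec (Pi.single ℓ 1) with hg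
  have hAffpd : Aff.PosDef := aff_posdef_of_block nf nc Aff Afc Acf Acc hA
  have hAffsymm : Affᵀ = Aff := hAffpd.isHermitian
  have hNT : Nᵀ = N := by rw [hN, Matrix.diagonal_transpose]
  set c := Aff⁻¹.mulVec g with hc
  have hAc : Aff.mulVec c = g := by
    rw [hc, Matrix.mulVec_mulVec, Matrix.mul_nonsing_inv _ hAffpd.det_pos.ne'.isUnit, Matrix.one_mulVec]
  -- symmetry of quadratic form
  have hsym : ∀ x y : Fin nf → ℝ, x ⬝ᵥ Aff.mulVec y = y ⬝ᵥ Aff.mulVec x := by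
    intro x y
    rw [Matrix.dotProduct_mulVec, ← Matrix.mulVec_transpose, hAffsymm, dotProduct_comm]
  intro w hw
  -- residual vanishes on pattern
  have hres : N.mulVec (Aff.mulVec wstar + g) = 0 := by
    rw [Matrix.mulVec_add]
    nth_rewrite 1 [← hfix]
    rw [hsol, neg_add_cancel]
  have horth : ∀ u : Fin nf → ℝ, N.mulVec u = u → (Aff.mulVec wstar + g) ⬝ᵥ u = 0 := by
    intro u hu
    calc (Aff.mulVec wstar + g) ⬝ᵥ u = (Aff.mulVec wstar + g) ⬝ᵥ N.mulVec u := by rw [hu]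
    _ = (N.mulVec (Aff.mulVec wstar + g)) ⬝ᵥ u := by
        rw [Matrix.dotProduct_mulVec, ← Matrix.mulVec_transpose, hNT]
    _ = 0 := by rw [hres, zero_dotProduct]
  have hu : N.mulVec (w - wstar) = w - wstar := by
    rw [Matrix.mulVec_sub, hw, hfix]
  have hquad : 0 ≤ (w - wstar) ⬝ᵥ Aff.mulVec (w - wstar) :=
    hAffpd.posSemidef.dotProduct_mulVec_nonneg (w - wstar)
  have horth' := horth (w - wstar) hu
  have hexpand : w ⬝ᵥ Aff.mulVec w + 2 * (g ⬝ᵥ w)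
      - (wstar ⬝ᵥ Aff.mulVec wstar + 2 * (g ⬝ᵥ wstar))
      = (w - wstar) ⬝ᵥ Aff.mulVec (w - wstar)
        + 2 * ((Aff.mulVec wstar + g) ⬝ᵥ (w - wstar)) := by
    have h1 := hsym wstar (w - wstar)
    simp only [Matrix.mulVec_sub, dotProduct_sub, sub_dotProduct,
      add_dotProduct, dotProduct_add] at *
    have h2 : (Aff.mulVec wstar) ⬝ᵥ w = w ⬝ᵥ Aff.mulVec wstar := dotProduct_comm _ _
    have h3 : (Aff.mulVec wstar) ⬝ᵥ wstar = wstar ⬝ᵥ Aff.mulVec wstar := dotProduct_comm _ _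
    have h4 := hsym wstar w
    ring_nf
    ring_nf at h1
    linarith
  have hfirst : wstar ⬝ᵥ Aff.mulVec wstar + 2 * (g ⬝ᵥ wstar) ≤
      w ⬝ᵥ Aff.mulVec w + 2 * (g ⬝ᵥ w) := by
    nlinarith [hquad, horth', hexpand]
  refine ⟨hfirst, ?_⟩
  have hshift : ∀ x : Fin nf → ℝ,
      (x + c) ⬝ᵥ Aff.mulVec (x + c) = x ⬝ᵥ Aff.mulVec x + 2 * (g ⬝ᵥ x) + c ⬝ᵥ Aff.mulVec c := by
    intro x
    have h1 : x ⬝ᵥ Aff.mulVec c = g ⬝ᵥ x := by rw [hAc, dotProduct_comm]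
    have h2 : c ⬝ᵥ Aff.mulVec x = g ⬝ᵥ x := by rw [hsym, h1]
    simp only [Matrix.mulVec_add, dotProduct_add, add_dotProduct]
    linarith
  rw [hshift wstar, hshift w]
  linarith
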